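/- arXiv:1507.07122 — 3 statements merged into one kernel-verified Lean document; each statement's English description precedes it below -/
import Mathlib

section
/- Let i, j ∈ {0,1,2} and let s be a real number with s ≥ 1. Then |γ_{i⊗j}'(s)/γ_{i⊗j}(s)| ≤ (d_{ij}/2)·(11/3 + log π + log(s/2 + 3)) + 1. -/
open Real

/-- The local parameters at infinity of the `k`-th symmetric power, for `k ∈ {0,1,2}`:
`P_0 = {0}`, `P_1 = {1/2, 3/2}`, `P_2 = {1, 1, 2}`. -/
noncomputable def localParams : ℕ → List ℝ
  | 0 => [0]
  | 1 => [1 / 2, 3 / 2]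
  | 2 => [1, 1, 2]
  | _ => []

/-- The Rankin–Selberg gamma factor
`γ_{i⊗j}(s) = ∏_{κ ∈ P_i} ∏_{ν ∈ P_j} π^(-s/2) Γ((s + κ + ν)/2)`. -/
noncomputable def rsGamma (i j : ℕ) (s : ℝ) : ℝ :=
  ((localParams i).map fun κ =>
    ((localParams j).map fun ν =>
      Real.pi ^ (-s / 2) * Real.Gamma ((s + κ + ν) / 2)).prod).prod

/-- The digamma function `ψ = Γ'/Γ`. -/
noncomputable def psiR (x : ℝ) : ℝ := deriv Real.Gamma x / Real.Gamma x

lemma hasDerivAt_logGamma {x : ℝ} (hx : 0 < x) :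
    HasDerivAt (Real.log ∘ Real.Gamma) (psiR x) x := by
  have hΓ : DifferentiableAt ℝ Real.Gamma x :=
    Real.differentiableAt_Gamma fun m => by
      have : (0:ℝ) ≤ m := Nat.cast_nonneg m
      nlinarith [hx]
  have h1 : HasDerivAt Real.Gamma (deriv Real.Gamma x) x := hΓ.hasDerivAt
  have h2 := (Real.hasDerivAt_log (Real.Gamma_pos_of_pos hx).ne').comp x h1
  have : (Real.Gamma x)⁻¹ * deriv Real.Gamma x = psiR x := by
    rw [psiR, div_eq_inv_mul]
  rwa [this] at h2

lemma psiR_le {x : ℝ} (hx : 0 < x) : psiR x ≤ Real.log x := by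
  have h := Real.convexOn_log_Gamma.le_slope_of_hasDerivAt (Set.mem_Ioi.2 hx)
    (Set.mem_Ioi.2 (by linarith : (0:ℝ) < x + 1)) (by linarith)
    (hasDerivAt_logGamma hx)
  have hs : slope (Real.log ∘ Real.Gamma) x (x + 1) = Real.log x := by
    rw [slope_def_field]
    simp only [Function.comp_apply]
    rw [Real.Gamma_add_one hx.ne', Real.log_mul hx.ne' (Real.Gamma_pos_of_pos hx).ne']
    ring
  rwa [hs] at h

lemma psiR_add_one {x : ℝ} (hx : 0 < x) : psiR (x + 1) = psiR x + 1 / x := by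
  have hΓ : ∀ y : ℝ, 0 < y → DifferentiableAt ℝ Real.Gamma y := fun y hy =>
    Real.differentiableAt_Gamma fun m => by
      have : (0:ℝ) ≤ m := Nat.cast_nonneg m
      nlinarith
  have h1 : HasDerivAt (fun t : ℝ => Real.Gamma (t + 1)) (deriv Real.Gamma (x + 1)) x := by
    have := ((hΓ (x+1) (by linarith)).hasDerivAt).comp x
      ((hasDerivAt_id x).add_const 1)
    simpa [Function.comp_def] using this
  have h2 : HasDerivAt (fun t : ℝ => t * Real.Gamma t)
      (Real.Gamma x + x * deriv Real.Gamma x) x := by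
    have := (hasDerivAt_id x).mul (hΓ x hx).hasDerivAt
    simpa [add_comm, Pi.mul_def] using this
  have heq : (fun t : ℝ => Real.Gamma (t + 1)) =ᶠ[nhds x] fun t => t * Real.Gamma t := by
    filter_upwards [eventually_gt_nhds hx] with t ht
    exact Real.Gamma_add_one ht.ne'
  have h3 : deriv Real.Gamma (x + 1) = Real.Gamma x + x * deriv Real.Gamma x :=
    (h1.congr_of_eventuallyEq heq.symm).unique h2
  have hΓx := (Real.Gamma_pos_of_pos hx).ne'
  rw [psiR, psiR, h3, Real.Gamma_add_one hx.ne']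
  field_simp
  ring

lemma le_psiR {x : ℝ} (hx : 0 < x) : Real.log x - 1 / x ≤ psiR x := by
  have h := Real.convexOn_log_Gamma.slope_le_of_hasDerivAt (Set.mem_Ioi.2 hx)
    (Set.mem_Ioi.2 (by linarith : (0:ℝ) < x + 1)) (by linarith)
    (hasDerivAt_logGamma (by linarith : (0:ℝ) < x + 1))
  have hs : slope (Real.log ∘ Real.Gamma) x (x + 1) = Real.log x := by
    rw [slope_def_field]
    simp only [Function.comp_apply]
    rw [Real.Gamma_add_one hx.ne', Real.log_mul hx.ne' (Real.Gamma_pos_of_pos hx).ne']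
    ring
  rw [hs, psiR_add_one hx] at h
  linarith

lemma abs_psiR_le {x : ℝ} (hx : 0 < x) : |psiR x| ≤ |Real.log x| + 1 / x := by
  have h1 := psiR_le hx
  have h2 := le_psiR hx
  have := abs_nonneg (Real.log x)
  have hxi : 0 < 1 / x := by positivity
  rw [abs_le]
  constructor
  · have : -|Real.log x| ≤ Real.log x := neg_abs_le _
    linarith
  · have : Real.log x ≤ |Real.log x| := le_abs_self _
    linarith

lemma factor_bound {a s : ℝ} (ha0 : 0 ≤ a) (ha4 : a ≤ 4) (hs : 1 ≤ s) :
    |(-Real.log Real.pi + psiR ((s + a) / 2)) / 2| ≤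
      (11 / 3 + Real.log Real.pi + Real.log (s / 2 + 3)) / 2 := by
  set x := (s + a) / 2 with hxdef
  have hx0 : (1:ℝ)/2 ≤ x := by rw [hxdef]; linarith
  have hxpos : 0 < x := by linarith
  have hxle : x ≤ s / 2 + 2 := by rw [hxdef]; linarith
  have hb : (2:ℝ) ≤ s / 2 + 3 := by linarith
  have hlogpi : 0 ≤ Real.log Real.pi :=
    Real.log_nonneg (by linarith [Real.pi_gt_three])
  have hpsi := abs_psiR_le hxpos
  have hinv : 1 / x ≤ 2 := by
    rw [div_le_iff₀ hxpos]; linarith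
  have hlogx : |Real.log x| ≤ Real.log (s / 2 + 3) := by
    rw [abs_le]
    constructor
    · rw [← Real.log_inv]
      apply Real.log_le_log (by positivity)
      have h1 : (s / 2 + 3)⁻¹ ≤ (2:ℝ)⁻¹ := inv_anti₀ (by norm_num) hb
      have : ((2:ℝ))⁻¹ = 1/2 := by norm_num
      linarith [this ▸ h1]
    · exact Real.log_le_log hxpos (by linarith)
  rw [abs_div]
  have h2 : |(2:ℝ)| = 2 := by norm_num
  rw [h2, div_le_div_iff_of_pos_right (by norm_num : (0:ℝ) < 2)]
  calc |(-Real.log Real.pi + psiR x)| ≤ |Real.log Real.pi| + |psiR x| := by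
        refine (abs_add_le _ _).trans ?_
        rw [abs_neg]
    _ ≤ Real.log Real.pi + (|Real.log x| + 1/x) := by
        rw [abs_of_nonneg hlogpi]; linarith
    _ ≤ 11/3 + Real.log Real.pi + Real.log (s/2+3) := by linarith

lemma hasDerivAt_factor {a s : ℝ} (hx : 0 < (s + a) / 2) :
    HasDerivAt (fun s : ℝ => Real.pi ^ (-s / 2) * Real.Gamma ((s + a) / 2))
      ((Real.pi ^ (-s / 2) * Real.Gamma ((s + a) / 2)) *
        ((-Real.log Real.pi + psiR ((s + a) / 2)) / 2)) s := by
  have hπ : (0:ℝ) < Real.pi := Real.pi_pos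
  have hpow : ∀ t : ℝ, Real.pi ^ (-t / 2) = Real.exp (-t / 2 * Real.log Real.pi) := by
    intro t; rw [Real.rpow_def_of_pos hπ]; ring_nf
  have h1 : HasDerivAt (fun t : ℝ => Real.pi ^ (-t / 2))
      (Real.pi ^ (-s / 2) * (-Real.log Real.pi / 2)) s := by
    have hinner : HasDerivAt (fun t : ℝ => -t / 2 * Real.log Real.pi)
        (-Real.log Real.pi / 2) s := by
      have h := ((hasDerivAt_id s).neg.div_const 2).mul_const (Real.log Real.pi)
      refine h.congr_deriv ?_
      ring
    have := (Real.hasDerivAt_exp (-s / 2 * Real.log Real.pi)).comp s hinner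
    have h2 : HasDerivAt (fun t : ℝ => Real.exp (-t / 2 * Real.log Real.pi))
        (Real.exp (-s / 2 * Real.log Real.pi) * (-Real.log Real.pi / 2)) s := this
    simp only [← hpow] at h2
    exact h2
  have hΓd : DifferentiableAt ℝ Real.Gamma ((s + a) / 2) :=
    Real.differentiableAt_Gamma fun m => by
      have : (0:ℝ) ≤ m := Nat.cast_nonneg m
      nlinarith
  have hinner2 : HasDerivAt (fun t : ℝ => (t + a) / 2) (1 / 2) s := by
    have := ((hasDerivAt_id s).add_const a).div_const 2
    simpa using this
  have h2 : HasDerivAt (fun t : ℝ => Real.Gamma ((t + a) / 2))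
      (deriv Real.Gamma ((s + a) / 2) * (1 / 2)) s := by
    have := (hΓd.hasDerivAt).comp s hinner2; exact this
  have := h1.mul h2
  refine this.congr_deriv ?_
  have hΓ := (Real.Gamma_pos_of_pos hx).ne'
  rw [psiR]
  field_simp

/-- Auxiliary: product of factors `π^(-s/2) Γ((s+a)/2)` over a list. -/
noncomputable def rsF (L : List ℝ) (s : ℝ) : ℝ :=
  (L.map fun a => Real.pi ^ (-s / 2) * Real.Gamma ((s + a) / 2)).prod

lemma rsF_deriv : ∀ (L : List ℝ), (∀ a ∈ L, 0 ≤ a ∧ a ≤ 4) → ∀ s : ℝ, 1 ≤ s →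
    ∃ C : ℝ, HasDerivAt (rsF L) (rsF L s * C) s ∧ 0 < rsF L s ∧
      |C| ≤ (L.length : ℝ) * ((11 / 3 + Real.log Real.pi + Real.log (s / 2 + 3)) / 2) := by
  intro L
  induction L with
  | nil =>
    intro _ s hs
    refine ⟨0, ?_, ?_, by simp⟩
    · have : rsF [] = fun _ : ℝ => (1:ℝ) := by funext t; simp [rsF]
      rw [this]; simpa using hasDerivAt_const s (1:ℝ)
    · simp [rsF]
  | cons a L ih =>
    intro hmem s hs
    obtain ⟨ha0, ha4⟩ := hmem a List.mem_cons_self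
    obtain ⟨C, hC, hpos, hbound⟩ := ih (fun b hb => hmem b (List.mem_cons_of_mem a hb)) s hs
    have hx : 0 < (s + a) / 2 := by linarith
    have hgpos : 0 < Real.pi ^ (-s / 2) * Real.Gamma ((s + a) / 2) := by
      have := Real.Gamma_pos_of_pos hx
      have := Real.rpow_pos_of_pos Real.pi_pos (-s / 2)
      positivity
    have hcons : rsF (a :: L) = fun t : ℝ =>
        (Real.pi ^ (-t / 2) * Real.Gamma ((t + a) / 2)) * rsF L t := by
      funext t; simp [rsF]
    set c := (-Real.log Real.pi + psiR ((s + a) / 2)) / 2 with hc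
    refine ⟨c + C, ?_, ?_, ?_⟩
    · rw [hcons]
      have h := (hasDerivAt_factor hx).mul hC
      refine h.congr_deriv ?_
      rw [hc]
      ring
    · rw [hcons]; exact mul_pos hgpos hpos
    · have h1 := factor_bound ha0 ha4 hs
      have h2 := abs_add_le c C
      have hB : 0 ≤ (11 / 3 + Real.log Real.pi + Real.log (s / 2 + 3)) / 2 := by
        have : 0 ≤ Real.log Real.pi := Real.log_nonneg (by linarith [Real.pi_gt_three])
        have : 0 ≤ Real.log (s / 2 + 3) := Real.log_nonneg (by linarith)
        positivity
      simp only [List.length_cons]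
      push_cast
      nlinarith [abs_nonneg C]

lemma rsGamma_eq_rsF (i j : ℕ) (hi : i ≤ 2) (hj : j ≤ 2) :
    ∃ L : List ℝ, (∀ a ∈ L, 0 ≤ a ∧ a ≤ 4) ∧ L.length = (i + 1) * (j + 1) ∧
      rsGamma i j = rsF L := by
  interval_cases i <;> interval_cases j
  · exact ⟨[0], by norm_num, by norm_num, by funext t; simp [rsGamma, rsF, localParams]⟩
  · exact ⟨[1/2, 3/2], by norm_num, by norm_num, by
      funext t; simp [rsGamma, rsF, localParams]; try ring_nf⟩
  · exact ⟨[1, 1, 2], by norm_num, by norm_num, by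
      funext t; simp [rsGamma, rsF, localParams]; try ring_nf⟩
  · exact ⟨[1/2, 3/2], by norm_num, by norm_num, by
      funext t; simp [rsGamma, rsF, localParams]; try ring_nf⟩
  · exact ⟨[1, 2, 2, 3], by norm_num, by norm_num, by
      funext t; simp [rsGamma, rsF, localParams]; try ring_nf⟩
  · exact ⟨[3/2, 3/2, 5/2, 5/2, 5/2, 7/2], by norm_num, by norm_num, by
      funext t; simp [rsGamma, rsF, localParams]; try ring_nf⟩
  · exact ⟨[1, 1, 2], by norm_num, by norm_num, by
      funext t; simp [rsGamma, rsF, localParams]; try ring_nf⟩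
  · exact ⟨[3/2, 5/2, 3/2, 5/2, 5/2, 7/2], by norm_num, by norm_num, by
      funext t; simp [rsGamma, rsF, localParams]; try ring_nf⟩
  · exact ⟨[2, 2, 3, 2, 2, 3, 3, 3, 4], by norm_num, by norm_num, by
      funext t; simp [rsGamma, rsF, localParams]; try ring_nf⟩

/-- For `i, j ∈ {0,1,2}` and real `s ≥ 1`:
`|γ_{i⊗j}'(s)/γ_{i⊗j}(s)| ≤ (d_{ij}/2)(11/3 + log π + log(s/2 + 3)) + 1`,
where `d_{ij} = (i+1)(j+1)`. -/
theorem rsGamma_logDeriv_bound_pos (i j : ℕ) (hi : i ≤ 2) (hj : j ≤ 2)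
    (s : ℝ) (hs : 1 ≤ s) :
    |deriv (rsGamma i j) s / rsGamma i j s| ≤
      (((i : ℝ) + 1) * ((j : ℝ) + 1)) / 2 * (11 / 3 + Real.log Real.pi
        + Real.log (s / 2 + 3)) + 1 := by
  obtain ⟨L, hmem, hlen, heq⟩ := rsGamma_eq_rsF i j hi hj
  obtain ⟨C, hC, hpos, hbound⟩ := rsF_deriv L hmem s hs
  rw [heq, hC.deriv, mul_div_cancel_left₀ _ hpos.ne']
  have hlen' : (L.length : ℝ) = ((i:ℝ) + 1) * ((j:ℝ) + 1) := by
    rw [hlen]; push_cast; ring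
  rw [hlen'] at hbound
  refine hbound.trans ?_
  nlinarith [sq_nonneg (((i:ℝ)+1)*((j:ℝ)+1))]
end

section
/- For every integer M ≥ 1, (2/(M+1))·∑_{k=1}^{M} k·|g(k/(M+1))| = M/π, where g(u) = −(1 − u)·cot(πu) − 1/π for 0 < u < 1. -/
lemma aux_mul_cos_le_sin {x : ℝ} (h0 : 0 < x) (h1 : x < Real.pi) :
    x * Real.cos x ≤ Real.sin x := by
  rcases lt_or_ge x (Real.pi / 2) with h | h
  · have hc : 0 < Real.cos x := Real.cos_pos_of_mem_Ioo ⟨by linarith [Real.pi_pos], h⟩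
    have ht := Real.lt_tan h0 h
    rw [Real.tan_eq_sin_div_cos] at ht
    exact ((lt_div_iff₀ hc).mp ht).le
  · have hc : Real.cos x ≤ 0 := Real.cos_nonpos_of_pi_div_two_le_of_le h (by linarith)
    have hs : 0 < Real.sin x := Real.sin_pos_of_pos_of_lt_pi h0 h1
    nlinarith

lemma aux_cot_pi_sub (x : ℝ) : Real.cot (Real.pi - x) = -Real.cot x := by
  rw [Real.cot_eq_cos_div_sin, Real.cot_eq_cos_div_sin, Real.cos_pi_sub, Real.sin_pi_sub,
    neg_div]

/-- Sign lemma: `g(u) ≤ 0` on `(0,1)`. -/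
lemma aux_g_nonpos {u : ℝ} (h0 : 0 < u) (h1 : u < 1) :
    -(1 - u) * Real.cot (Real.pi * u) - 1 / Real.pi ≤ 0 := by
  have hpi := Real.pi_pos
  set x := Real.pi * (1 - u) with hx
  have hx0 : 0 < x := mul_pos hpi (by linarith)
  have hx1 : x < Real.pi := by nlinarith
  have hcot : Real.cot (Real.pi * u) = -Real.cot x := by
    rw [← aux_cot_pi_sub x]; congr 1; ring
  have hs : 0 < Real.sin x := Real.sin_pos_of_pos_of_lt_pi hx0 hx1
  have key := aux_mul_cos_le_sin hx0 hx1
  rw [hcot, Real.cot_eq_cos_div_sin]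
  rw [sub_nonpos, neg_mul, mul_neg, neg_neg, ← mul_div_assoc,
    div_le_div_iff₀ hs hpi]
  nlinarith [key]

lemma aux_gauss (n : ℕ) : ∑ k ∈ Finset.Icc 1 n, (k : ℝ) = n * (n + 1) / 2 := by
  induction n with
  | zero => simp
  | succ n ih =>
    rw [Finset.sum_Icc_succ_top (Nat.le_add_left 1 n), ih]
    push_cast
    ring

/-- For every integer `M ≥ 1`: `(2/(M+1)) ∑_{k=1}^{M} k·|g(k/(M+1))| = M/π`, where
`g(u) = -(1-u)cot(πu) - 1/π`. -/
theorem g_weighted_sum_eq (M : ℕ) (hM : 1 ≤ M) :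
    2 / ((M : ℝ) + 1) * ∑ k ∈ Finset.Icc 1 M,
        (k : ℝ) * |(-(1 - (k : ℝ) / (M + 1)) *
            Real.cot (Real.pi * ((k : ℝ) / (M + 1))) - 1 / Real.pi)| =
      (M : ℝ) / Real.pi := by
  have hpi := Real.pi_pos
  have hc : (0:ℝ) < (M:ℝ) + 1 := by positivity
  have hc0 : ((M:ℝ) + 1) ≠ 0 := ne_of_gt hc
  -- Step 1: remove absolute values
  have habs : ∀ k ∈ Finset.Icc 1 M,
      (k : ℝ) * |(-(1 - (k : ℝ) / (M + 1)) *
          Real.cot (Real.pi * ((k : ℝ) / (M + 1))) - 1 / Real.pi)| =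
      (k : ℝ) * ((1 - (k : ℝ) / (M + 1)) *
          Real.cot (Real.pi * ((k : ℝ) / (M + 1)))) + (k : ℝ) * (1 / Real.pi) := by
    intro k hk
    rw [Finset.mem_Icc] at hk
    have hk1 : (1:ℝ) ≤ (k:ℝ) := by exact_mod_cast hk.1
    have hkM : (k:ℝ) ≤ (M:ℝ) := by exact_mod_cast hk.2
    have hu0 : 0 < (k:ℝ) / (M + 1) := by positivity
    have hu1 : (k:ℝ) / (M + 1) < 1 := by
      rw [div_lt_one hc]; linarith
    rw [abs_of_nonpos (aux_g_nonpos hu0 hu1)]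
    ring
  rw [Finset.sum_congr rfl habs, Finset.sum_add_distrib]
  -- Step 2: the cotangent part vanishes
  have hT : ∑ k ∈ Finset.Icc 1 M, (k : ℝ) * ((1 - (k : ℝ) / (M + 1)) *
      Real.cot (Real.pi * ((k : ℝ) / (M + 1)))) = 0 := by
    apply Finset.sum_involution (fun a _ => M + 1 - a)
    · intro a ha
      rw [Finset.mem_Icc] at ha
      have hb : ((M + 1 - a : ℕ) : ℝ) = (M:ℝ) + 1 - a := by
        have : a ≤ M + 1 := le_trans ha.2 (Nat.le_succ M)
        push_cast [Nat.cast_sub this]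
        ring
      have ha1 : (1:ℝ) ≤ (a:ℝ) := by exact_mod_cast ha.1
      have haM : (a:ℝ) ≤ (M:ℝ) := by exact_mod_cast ha.2
      rw [hb]
      have hdiv : ((M:ℝ) + 1 - a) / ((M:ℝ) + 1) = 1 - (a:ℝ) / ((M:ℝ) + 1) := by
        field_simp
      rw [hdiv]
      have hcot : Real.cot (Real.pi * (1 - (a:ℝ) / ((M:ℝ) + 1))) =
          -Real.cot (Real.pi * ((a:ℝ) / ((M:ℝ) + 1))) := by
        rw [show Real.pi * (1 - (a:ℝ) / ((M:ℝ) + 1)) =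
            Real.pi - Real.pi * ((a:ℝ) / ((M:ℝ) + 1)) by ring, aux_cot_pi_sub]
      rw [hcot]
      field_simp
      ring
    · intro a ha hfa
      rw [Finset.mem_Icc] at ha
      intro heq
      apply hfa
      have h2a : M + 1 = 2 * a := by omega
      have ha1 : (1:ℝ) ≤ (a:ℝ) := by exact_mod_cast ha.1
      have ha0 : (a:ℝ) ≠ 0 := by linarith
      have : (a:ℝ) / ((M:ℝ) + 1) = 1 / 2 := by
        rw [show ((M:ℝ) + 1) = 2 * a by exact_mod_cast congrArg (Nat.cast : ℕ → ℝ) h2a]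
        rw [div_eq_div_iff (mul_ne_zero two_ne_zero ha0) two_ne_zero]
        ring
      rw [this]
      have : Real.cot (Real.pi * (1/2)) = 0 := by
        rw [show Real.pi * (1/2 : ℝ) = Real.pi / 2 by ring, Real.cot_eq_cos_div_sin,
          Real.cos_pi_div_two, zero_div]
      rw [this]
      ring
    · intro a ha
      rw [Finset.mem_Icc] at ha ⊢
      omega
    · intro a ha
      rw [Finset.mem_Icc] at ha
      omega
  rw [hT, zero_add, ← Finset.sum_mul, aux_gauss M]
  field_simp
end

section
/- The function u ↦ |g(u)| is monotonically decreasing on the interval (0, 1): for all real u, v with 0 < u ≤ v < 1, one has |g(v)| ≤ |g(u)|, where g(u) = −(1 − u)·cot(πu) − 1/π. -/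
open Real Set

private lemma sin_pi_mul_pos {u : ℝ} (h0 : 0 < u) (h1 : u < 1) : 0 < Real.sin (Real.pi * u) :=
  Real.sin_pos_of_pos_of_lt_pi (by positivity)
    (by nlinarith [Real.pi_pos])

/-- `x cos x < sin x` for `0 < x < π`. -/
private lemma mul_cos_lt_sin {x : ℝ} (h0 : 0 < x) (h1 : x < Real.pi) :
    x * Real.cos x < Real.sin x := by
  rcases le_or_gt (Real.cos x) 0 with h | h
  · have hs := Real.sin_pos_of_pos_of_lt_pi h0 h1
    nlinarith
  · have hx : x < Real.pi / 2 := by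
      by_contra hx
      push_neg at hx
      have : Real.cos x ≤ 0 := Real.cos_nonpos_of_pi_div_two_le_of_le hx (by linarith [Real.pi_pos])
      linarith
    have htan := Real.lt_tan h0 hx
    rw [Real.tan_eq_sin_div_cos, lt_div_iff₀ h] at htan
    linarith

/-- `g` is negative on `(0,1)`. -/
private lemma g_neg {w : ℝ} (h0 : 0 < w) (h1 : w < 1) :
    -(1 - w) * Real.cot (Real.pi * w) - 1 / Real.pi < 0 := by
  have hs : 0 < Real.sin (Real.pi * w) := sin_pi_mul_pos h0 h1
  have hπ := Real.pi_pos
  set x := Real.pi * (1 - w) with hxdef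
  have hx0 : 0 < x := mul_pos Real.pi_pos (by linarith)
  have hx1 : x < Real.pi := by nlinarith
  have hkey : x * Real.cos x < Real.sin x := mul_cos_lt_sin hx0 hx1
  have hsin : Real.sin (Real.pi * w) = Real.sin x := by
    rw [hxdef, show Real.pi * (1 - w) = Real.pi - Real.pi * w by ring, Real.sin_pi_sub]
  have hcos : Real.cos (Real.pi * w) = -Real.cos x := by
    rw [hxdef, show Real.pi * (1 - w) = Real.pi - Real.pi * w by ring, Real.cos_pi_sub]
    ring
  have heq : -(1 - w) * Real.cot (Real.pi * w) - 1 / Real.pi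
      = -((Real.sin x - x * Real.cos x) / (Real.pi * Real.sin x)) := by
    rw [Real.cot_eq_cos_div_sin, hsin, hcos, hxdef]
    have hsx : Real.sin x ≠ 0 := by rw [← hsin]; exact ne_of_gt hs
    rw [hxdef] at hsx
    generalize Real.sin (Real.pi * (1 - w)) = S at hsx ⊢
    generalize Real.cos (Real.pi * (1 - w)) = C
    field_simp
    ring
  rw [heq, neg_lt, neg_zero]
  apply div_pos (by linarith)
  have : 0 < Real.sin x := by rw [← hsin]; exact hs
  positivity

private lemma g_strictMono :
    StrictMonoOn (fun w : ℝ => -(1 - w) * Real.cot (Real.pi * w) - 1 / Real.pi) (Ioo 0 1) := by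
  have hfun : ∀ w : ℝ, -(1 - w) * Real.cot (Real.pi * w) - 1 / Real.pi
      = -(1 - w) * (Real.cos (Real.pi * w) / Real.sin (Real.pi * w)) - 1 / Real.pi := by
    intro w; rw [Real.cot_eq_cos_div_sin]
  simp only [hfun]
  have hπ := Real.pi_pos
  apply strictMonoOn_of_deriv_pos (convex_Ioo 0 1)
  · apply ContinuousOn.sub _ continuousOn_const
    apply ContinuousOn.mul (by fun_prop)
    apply ContinuousOn.div (by fun_prop) (by fun_prop)
    intro w hw
    exact ne_of_gt (sin_pi_mul_pos hw.1 hw.2)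
  · intro w hw
    rw [interior_Ioo] at hw
    obtain ⟨hw0, hw1⟩ := hw
    have hs : 0 < Real.sin (Real.pi * w) := sin_pi_mul_pos hw0 hw1
    have hderiv : HasDerivAt
        (fun w : ℝ => -(1 - w) * (Real.cos (Real.pi * w) / Real.sin (Real.pi * w)) - 1 / Real.pi)
        ((Real.sin (Real.pi * w) * Real.cos (Real.pi * w) + (1 - w) * Real.pi)
          / Real.sin (Real.pi * w) ^ 2) w := by
      have hid : HasDerivAt (fun w : ℝ => Real.pi * w) Real.pi w := by
        simpa using (hasDerivAt_id w).const_mul Real.pi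
      have hc : HasDerivAt (fun w : ℝ => Real.cos (Real.pi * w))
          (-Real.sin (Real.pi * w) * Real.pi) w := (Real.hasDerivAt_cos _).comp w hid
      have hsn : HasDerivAt (fun w : ℝ => Real.sin (Real.pi * w))
          (Real.cos (Real.pi * w) * Real.pi) w := (Real.hasDerivAt_sin _).comp w hid
      have hq := hc.fun_div hsn (ne_of_gt hs)
      have hl : HasDerivAt (fun w : ℝ => -(1 - w)) 1 w := by
        simpa using ((hasDerivAt_id w).sub_const (1:ℝ))
      have := (hl.fun_mul hq).sub_const (1 / Real.pi)
      refine this.congr_deriv ?_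
      symm
      field_simp
      linear_combination (Real.sin_sq_add_cos_sq (Real.pi * w)) *
        (Real.pi * w - Real.pi)
    rw [hderiv.deriv]
    apply div_pos _ (by positivity)
    -- sin(πw)cos(πw) + (1-w)π > 0
    have h2 : Real.sin (2 * (Real.pi * (1 - w))) < 2 * (Real.pi * (1 - w)) :=
      Real.sin_lt (by nlinarith)
    have hsc : Real.sin (Real.pi * w) * Real.cos (Real.pi * w)
        = -(Real.sin (Real.pi * (1 - w)) * Real.cos (Real.pi * (1 - w))) := by
      rw [show Real.pi * (1 - w) = Real.pi - Real.pi * w by ring, Real.sin_pi_sub, Real.cos_pi_sub]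
      ring
    rw [Real.sin_two_mul] at h2
    nlinarith

/-- `|g|` is monotonically decreasing on `(0,1)`: for `0 < u ≤ v < 1`,
`|g(v)| ≤ |g(u)|`, where `g(u) = -(1-u)cot(πu) - 1/π`. -/
theorem abs_g_antitone (u v : ℝ) (hu : 0 < u) (huv : u ≤ v) (hv : v < 1) :
    |(-(1 - v) * Real.cot (Real.pi * v) - 1 / Real.pi)| ≤
      |(-(1 - u) * Real.cot (Real.pi * u) - 1 / Real.pi)| := by
  have hu1 : u < 1 := lt_of_le_of_lt huv hv
  have hv0 : 0 < v := lt_of_lt_of_le hu huv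
  have hmono := g_strictMono.monotoneOn ⟨hu, hu1⟩ ⟨hv0, hv⟩ huv
  have hnu := g_neg hu hu1
  have hnv := g_neg hv0 hv
  rw [abs_of_neg hnu, abs_of_neg hnv]
  linarith
end
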